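/- arXiv:2003.09967 — 3 statements merged into one kernel-verified Lean document; each statement's English description precedes it below -/
import Mathlib

section
/- Let q ≥ 1, let P₁, P₂ ⊆ ℝ^q be nonempty convex sets, and let U₁, U₂ : ℝ^q × ℝ^q → ℝ be differentiable functions such that for every fixed p₂ the map p₁ ↦ U₁(p₁, p₂) is concave and for every fixed p₁ the map p₂ ↦ U₂(p₁, p₂) is concave. Then a pair (p₁*, p₂*) ∈ P₁ × P₂ is a Nash equilibrium (i.e., p₁* maximizes p₁ ↦ U₁(p₁, p₂*) over P₁ and p₂* maximizes p₂ ↦ U₂(p₁*, p₂) over P₂) if and only if for all (p₁, p₂) ∈ P₁ × P₂ one has ⟨−∇₁U₁(p₁*, p₂*), p₁ − p₁*⟩ + ⟨−∇₂U₂(p₁*, p₂*), p₂ − p₂*⟩ ≥ 0, where ∇ᵢ denotes the gradient with respect to pᵢ. -/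
open scoped RealInnerProductSpace
open Filter

variable {E : Type*} [NormedAddCommGroup E] [InnerProductSpace ℝ E] [CompleteSpace E]

lemma aux_hasDerivAt (g : E → ℝ) (x v : E) (hg : DifferentiableAt ℝ g x) :
    HasDerivAt (fun t : ℝ => g (x + t • v)) ⟪gradient g x, v⟫ 0 := by
  have h1 : HasDerivAt (fun t : ℝ => x + t • v) v 0 := by
    simpa using ((hasDerivAt_id (0:ℝ)).smul_const v).const_add x
  have h2 : HasGradientAt g (gradient g x) x := hg.hasGradientAt
  have h3 := h2.hasFDerivAt
  have h4 : HasFDerivAt g (InnerProductSpace.toDual ℝ E (gradient g x)) ((fun t : ℝ => x + t • v) 0) := by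
    simpa using h3
  have := h4.comp_hasDerivAt 0 h1
  simpa [InnerProductSpace.toDual_apply_apply, Function.comp_def] using this

lemma max_iff_grad (P : Set E) (hP : Convex ℝ P) (g : E → ℝ)
    (hg : Differentiable ℝ g) (hc : ConcaveOn ℝ Set.univ g)
    (x : E) (hx : x ∈ P) :
    (∀ p ∈ P, g p ≤ g x) ↔ ∀ p ∈ P, ⟪gradient g x, p - x⟫ ≤ 0 := by
  constructor
  · intro hmax p hp
    have hd := aux_hasDerivAt g x (p - x) (hg x)
    have htend := hd.tendsto_slope_zero_right
    simp only [zero_add, zero_smul, add_zero, smul_eq_mul] at htend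
    refine le_of_tendsto htend ?_
    filter_upwards [Ioo_mem_nhdsGT_of_mem (Set.left_mem_Ico.2 one_pos)] with t ht
    have hmem : x + t • (p - x) ∈ P := by
      have := hP hx hp (by linarith [ht.2] : (0:ℝ) ≤ 1 - t) ht.1.le (by ring)
      convert this using 1
      module
    have := hmax _ hmem
    have ht0 : 0 < t := ht.1
    apply mul_nonpos_of_nonneg_of_nonpos (by positivity)
    linarith
  · intro hvi p hp
    have hd := aux_hasDerivAt g x (p - x) (hg x)
    have htend := hd.tendsto_slope_zero_right
    simp only [zero_add, zero_smul, add_zero, smul_eq_mul] at htend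
    have hge : g p - g x ≤ ⟪gradient g x, p - x⟫ := by
      refine ge_of_tendsto htend ?_
      filter_upwards [Ioo_mem_nhdsGT_of_mem (Set.left_mem_Ico.2 one_pos)] with t ht
      have ht0 : 0 < t := ht.1
      have ht1 : t ≤ 1 := ht.2.le
      have hcc := hc.2 (Set.mem_univ x) (Set.mem_univ p) (by linarith : (0:ℝ) ≤ 1 - t) ht0.le (by ring)
      have heq : (1 - t) • x + t • p = x + t • (p - x) := by module
      rw [heq] at hcc
      simp only [smul_eq_mul] at hcc ⊢
      have : t * (g p - g x) ≤ g (x + t • (p - x)) - g x := by linarith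
      calc g p - g x = t⁻¹ * (t * (g p - g x)) := by field_simp
        _ ≤ t⁻¹ * (g (x + t • (p - x)) - g x) :=
            mul_le_mul_of_nonneg_left this (by positivity)
    linarith [hvi p hp]


/-- A pair `(ps₁, ps₂) ∈ P₁ × P₂` is a Nash equilibrium (each agent plays a best response,
with concave differentiable utilities over nonempty convex strategy sets) if and only if it
solves the variational inequality `VI(f, P₁ × P₂)` with `f(p) = (-∇₁U₁(p), -∇₂U₂(p))`. -/
theorem nash_equilibrium_iff_variational_inequality
    (q : ℕ) (hq : 1 ≤ q)
    (P₁ P₂ : Set (EuclideanSpace ℝ (Fin q)))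
    (hP₁ne : P₁.Nonempty) (hP₂ne : P₂.Nonempty)
    (hP₁ : Convex ℝ P₁) (hP₂ : Convex ℝ P₂)
    (U₁ U₂ : EuclideanSpace ℝ (Fin q) × EuclideanSpace ℝ (Fin q) → ℝ)
    (hU₁d : Differentiable ℝ U₁) (hU₂d : Differentiable ℝ U₂)
    (hU₁c : ∀ p₂, ConcaveOn ℝ Set.univ (fun p₁ => U₁ (p₁, p₂)))
    (hU₂c : ∀ p₁, ConcaveOn ℝ Set.univ (fun p₂ => U₂ (p₁, p₂)))
    (ps₁ ps₂ : EuclideanSpace ℝ (Fin q)) (hps₁ : ps₁ ∈ P₁) (hps₂ : ps₂ ∈ P₂) :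
    ((∀ p₁ ∈ P₁, U₁ (p₁, ps₂) ≤ U₁ (ps₁, ps₂)) ∧
      (∀ p₂ ∈ P₂, U₂ (ps₁, p₂) ≤ U₂ (ps₁, ps₂))) ↔
    (∀ p₁ ∈ P₁, ∀ p₂ ∈ P₂,
      ⟪-gradient (fun x => U₁ (x, ps₂)) ps₁, p₁ - ps₁⟫ +
        ⟪-gradient (fun x => U₂ (ps₁, x)) ps₂, p₂ - ps₂⟫ ≥ 0) := by
  have hg₁ : Differentiable ℝ (fun x => U₁ (x, ps₂)) :=
    hU₁d.comp (differentiable_id.prodMk (differentiable_const _))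
  have hg₂ : Differentiable ℝ (fun x => U₂ (ps₁, x)) :=
    hU₂d.comp ((differentiable_const _).prodMk differentiable_id)
  rw [max_iff_grad P₁ hP₁ _ hg₁ (hU₁c ps₂) ps₁ hps₁,
      max_iff_grad P₂ hP₂ _ hg₂ (hU₂c ps₁) ps₂ hps₂]
  constructor
  · rintro ⟨h1, h2⟩ p₁ hp₁ p₂ hp₂
    have := h1 p₁ hp₁
    have := h2 p₂ hp₂
    simp only [inner_neg_left]
    linarith
  · intro h
    constructor
    · intro p₁ hp₁
      have := h p₁ hp₁ ps₂ hps₂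
      simp only [inner_neg_left, sub_self, inner_zero_right] at this
      linarith
    · intro p₂ hp₂
      have := h ps₁ hps₁ p₂ hp₂
      simp only [inner_neg_left, sub_self, inner_zero_right] at this
      linarith
end

section
/- (Theorem 1 of the paper.) Let q, m ≥ 1 and ε ≥ 0. For i = 1, 2 let P_i = {p ∈ ℝ^q : A_i p = b_i, p ∈ K_i}, where A_i is a real m × q matrix, b_i ∈ ℝ^m, and K_i ⊆ ℝ^q is a closed convex cone with nonempty interior, and suppose Slater's condition holds for each P_i: there exists p_i⁰ in the interior of K_i with A_i p_i⁰ = b_i. Let f₁, f₂ : ℝ^q × ℝ^q → ℝ^q and let p̄ = (p̄₁, p̄₂) ∈ P₁ × P₂. Then the following are equivalent: (1) ⟨f₁(p̄), p₁ − p̄₁⟩ + ⟨f₂(p̄), p₂ − p̄₂⟩ ≥ −ε for all (p₁, p₂) ∈ P₁ × P₂; (2) there exist y₁, y₂ ∈ ℝ^m such that f_i(p̄) − A_iᵀ y_i ∈ K_i* for i = 1, 2 and Σ_{i=1}^{2} (⟨f_i(p̄), p̄_i⟩ − ⟨b_i, y_i⟩) ≤ ε, where K_i* = {x ∈ ℝ^q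 : ⟨x, p⟩ ≥ 0 for all p ∈ K_i} is the dual cone of K_i. -/
open Matrix Filter

namespace EpsVI
variable {n : ℕ}

lemma cont_dotl (p : Fin n → ℝ) : Continuous fun w : Fin n → ℝ => w ⬝ᵥ p := by
  unfold dotProduct; fun_prop

lemma cont_dotr (p : Fin n → ℝ) : Continuous fun w : Fin n → ℝ => p ⬝ᵥ w := by
  unfold dotProduct; fun_prop

lemma abs_dot_le (x y : Fin n → ℝ) : |x ⬝ᵥ y| ≤ n * ‖x‖ * ‖y‖ := by
  calc |x ⬝ᵥ y| ≤ ∑ i, |x i * y i| := Finset.abs_sum_le_sum_abs _ _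
    _ ≤ ∑ _i : Fin n, ‖x‖ * ‖y‖ := by
        refine Finset.sum_le_sum fun i _ => ?_
        rw [abs_mul]
        have h1 : |x i| ≤ ‖x‖ := by
          simpa [Real.norm_eq_abs] using norm_le_pi_norm x i
        have h2 : |y i| ≤ ‖y‖ := by
          simpa [Real.norm_eq_abs] using norm_le_pi_norm y i
        exact mul_le_mul h1 h2 (abs_nonneg _) (le_trans (abs_nonneg _) h1)
    _ = n * ‖x‖ * ‖y‖ := by simp [mul_assoc]

lemma lin_eq_dot (φ : (Fin n → ℝ) →ₗ[ℝ] ℝ) (x : Fin n → ℝ) :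
    φ x = (fun i => φ (Pi.single i 1)) ⬝ᵥ x := by
  conv_lhs => rw [pi_eq_sum_univ x]
  simp only [map_sum, _root_.map_smul, smul_eq_mul, dotProduct]
  refine Finset.sum_congr rfl fun i _ => ?_
  rw [mul_comm]
  congr 2
  funext j
  simp [Pi.single_apply, eq_comm]

/-- zero is in a nonempty closed cone -/
lemma zero_mem {K : Set (Fin n → ℝ)} (hcl : IsClosed K)
    (hcone : ∀ t : ℝ, 0 < t → ∀ x ∈ K, t • x ∈ K) {x : Fin n → ℝ} (hx : x ∈ K) :
    (0 : Fin n → ℝ) ∈ K := by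
  have ht : Tendsto (fun k : ℕ => ((k : ℝ) + 1)⁻¹ • x) atTop (nhds ((0:ℝ) • x)) := by
    refine Tendsto.smul_const ?_ x
    exact tendsto_one_div_add_atTop_nhds_zero_nat.congr (by intro k; simp [one_div])
  rw [zero_smul] at ht
  exact hcl.mem_of_tendsto ht (Eventually.of_forall fun k =>
    hcone _ (by positivity) _ hx)

/-- membership in the double dual of a nonempty closed convex cone -/
lemma mem_of_dual_dual {K : Set (Fin n → ℝ)} (hcl : IsClosed K) (hcv : Convex ℝ K)
    (hcone : ∀ t : ℝ, 0 < t → ∀ x ∈ K, t • x ∈ K) (hne : K.Nonempty)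
    {p : Fin n → ℝ} (hp : ∀ w : Fin n → ℝ, (∀ a ∈ K, 0 ≤ w ⬝ᵥ a) → 0 ≤ w ⬝ᵥ p) :
    p ∈ K := by
  by_contra hpK
  obtain ⟨φ, u, hφK, hφp⟩ := geometric_hahn_banach_closed_point hcv hcl hpK
  -- φ a ≤ 0 on K
  have h0 : ∀ a ∈ K, φ a ≤ 0 := by
    intro a ha
    by_contra hlt
    push_neg at hlt
    obtain ⟨t, ht0, htu⟩ : ∃ t : ℝ, 0 < t ∧ u < t * φ a := by
      have h1 : (0:ℝ) < u + 1 + |u| := by nlinarith [abs_nonneg u, le_abs_self u, neg_abs_le u]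
      refine ⟨(u + 1 + |u|) / φ a, div_pos h1 hlt, ?_⟩
      rw [div_mul_cancel₀ _ (ne_of_gt hlt)]
      nlinarith [abs_nonneg u, le_abs_self u]
    have := hφK _ (hcone t ht0 a ha)
    rw [_root_.map_smul, smul_eq_mul] at this
    linarith
  have hu : 0 < u := by
    have := hφK 0 (zero_mem hcl hcone hne.choose_spec)
    simpa using this
  set w : Fin n → ℝ := fun i => -φ (Pi.single i 1) with hw
  have hwdot : ∀ x, w ⬝ᵥ x = -φ x := by
    intro x
    have h3 := lin_eq_dot φ.toLinearMap x
    simp only [ContinuousLinearMap.coe_coe] at h3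
    have hw2 : w ⬝ᵥ x = -((fun i => φ (Pi.single i 1)) ⬝ᵥ x) := by
      simp [hw, dotProduct, Finset.sum_neg_distrib]
    rw [hw2, ← h3]
  have hwK : ∀ a ∈ K, 0 ≤ w ⬝ᵥ a := fun a ha => by
    rw [hwdot]; linarith [h0 a ha]
  have := hp w hwK
  rw [hwdot] at this
  linarith

/-- Strong conic duality with a Slater point. -/
lemma conic_duality {q m : ℕ} {K : Set (Fin q → ℝ)}
    (hcl : IsClosed K) (hcv : Convex ℝ K)
    (hcone : ∀ t : ℝ, 0 < t → ∀ x ∈ K, t • x ∈ K)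
    {A : Matrix (Fin m) (Fin q) ℝ} {b : Fin m → ℝ} {p0 : Fin q → ℝ}
    (hp0K : p0 ∈ interior K) (hp0A : A.mulVec p0 = b)
    {c pb : Fin q → ℝ} {δ : ℝ} (hδ : 0 ≤ δ)
    (hpbA : A.mulVec pb = b) (hpbK : pb ∈ K)
    (H : ∀ p ∈ K, A.mulVec p = b → c ⬝ᵥ pb - δ ≤ c ⬝ᵥ p) :
    ∃ y : Fin m → ℝ, (∀ p ∈ K, 0 ≤ (c - A.transpose.mulVec y) ⬝ᵥ p) ∧
      c ⬝ᵥ pb - b ⬝ᵥ y ≤ δ := by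
  classical
  set v : ℝ := c ⬝ᵥ pb - δ with hv
  set Kstar : Set (Fin q → ℝ) := {w | ∀ p ∈ K, 0 ≤ w ⬝ᵥ p} with hKstar
  set R : Submodule ℝ (Fin q → ℝ) := LinearMap.range (Matrix.mulVecLin A.transpose) with hR
  set D : Set ((Fin q → ℝ) × ℝ) :=
    {z | ∃ g, g ∈ R ∧ z.1 - g ∈ Kstar ∧ z.2 ≤ p0 ⬝ᵥ g} with hD
  -- the key fact relating p0 and b
  have hp0b : ∀ y : Fin m → ℝ, p0 ⬝ᵥ A.transpose.mulVec y = b ⬝ᵥ y := by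
    intro y
    rw [Matrix.dotProduct_mulVec, Matrix.vecMul_transpose, hp0A]
  -- Step A : membership of (c,v) in D gives the result
  suffices hmem : (c, v) ∈ D by
    obtain ⟨g, hgR, hgK, hgle⟩ := hmem
    obtain ⟨y, hy⟩ := hgR
    have hy' : A.transpose.mulVec y = g := by rw [← hy]; rfl
    refine ⟨y, ?_, ?_⟩
    · intro p hp
      have := hgK p hp
      rw [hy']
      simpa using this
    · have h1 : v ≤ p0 ⬝ᵥ g := hgle
      rw [← hy', hp0b y] at h1
      simp only [hv] at h1
      linarith
  -- closedness of Kstar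
  have hKstar_closed : IsClosed Kstar := by
    have : Kstar = ⋂ p ∈ K, {w : Fin q → ℝ | 0 ≤ w ⬝ᵥ p} := by
      ext w; simp [hKstar, Set.mem_iInter]
    rw [this]
    exact isClosed_biInter fun p _ => isClosed_le continuous_const (cont_dotl p)
  have hKstar0 : (0 : Fin q → ℝ) ∈ Kstar := by
    intro p _; simp
  -- the Slater radius
  obtain ⟨r, hr0, hball⟩ : ∃ r > 0, Metric.ball p0 r ⊆ K :=
    Metric.mem_nhds_iff.mp (mem_interior_iff_mem_nhds.mp hp0K)
  -- Step B : D is closed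
  have hDclosed : IsClosed D := by
    refine IsSeqClosed.isClosed ?_
    intro zn z hzn hz
    choose g hgR hgK hgle using hzn
    have hz1 : Tendsto (fun k => (zn k).1) atTop (nhds z.1) :=
      ((continuous_fst.tendsto z).comp hz)
    have hz2 : Tendsto (fun k => (zn k).2) atTop (nhds z.2) :=
      ((continuous_snd.tendsto z).comp hz)
    -- bounds on the converging sequences
    obtain ⟨C1, hC1⟩ := isBounded_iff_forall_norm_le.mp hz1.cauchySeq.isBounded_range
    obtain ⟨C2, hC2⟩ := isBounded_iff_forall_norm_le.mp hz2.cauchySeq.isBounded_range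
    have hC1' : ∀ k, ‖(zn k).1‖ ≤ C1 := fun k => hC1 _ (Set.mem_range_self k)
    have hC2' : ∀ k, |(zn k).2| ≤ C2 := fun k => by
      simpa [Real.norm_eq_abs] using hC2 _ (Set.mem_range_self k)
    -- boundedness of the multipliers g k
    set C : ℝ := (2 / r) * (q * C1 * (‖p0‖ + r / 2) + C2) with hC
    have hgbound : ∀ k, ‖g k‖ ≤ C := by
      intro k
      set e : Fin q → ℝ := fun i => if 0 ≤ g k i then r / 2 else -(r / 2) with he
      have hek : ∀ i, |e i| = r / 2 := by
        intro i
        by_cases h : 0 ≤ g k i <;> simp [he, h, abs_of_pos, hr0, le_of_lt hr0, abs_of_nonneg]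
      have hemem : p0 + e ∈ K := by
        apply hball
        rw [Metric.mem_ball, dist_eq_norm, add_sub_cancel_left]
        have : ‖e‖ ≤ r / 2 := by
          rw [pi_norm_le_iff_of_nonneg (by linarith)]
          intro i
          rw [Real.norm_eq_abs, hek i]
        linarith
      have hkey : 0 ≤ ((zn k).1 - g k) ⬝ᵥ (p0 + e) := hgK k _ hemem
      have hge : g k ⬝ᵥ e = (r / 2) * ∑ i, |g k i| := by
        rw [Finset.mul_sum]
        refine Finset.sum_congr rfl fun i _ => ?_
        by_cases h : 0 ≤ g k i
        · simp [he, h, abs_of_nonneg h]; ring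
        · push_neg at h
          simp [he, not_le.mpr h, abs_of_neg h]; ring
      have hgp0 : (zn k).2 ≤ p0 ⬝ᵥ g k := hgle k
      have hdot1 : (zn k).1 ⬝ᵥ (p0 + e) ≤ q * C1 * (‖p0‖ + r / 2) := by
        have h1 := abs_dot_le ((zn k).1) (p0 + e)
        have h2 : ‖p0 + e‖ ≤ ‖p0‖ + r / 2 := by
          refine le_trans (norm_add_le _ _) ?_
          have : ‖e‖ ≤ r / 2 := by
            rw [pi_norm_le_iff_of_nonneg (by linarith)]
            intro i; rw [Real.norm_eq_abs, hek i]
          linarith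
        have h3 := le_abs_self ((zn k).1 ⬝ᵥ (p0 + e))
        have h4 : (q:ℝ) * ‖(zn k).1‖ * ‖p0 + e‖ ≤ q * C1 * (‖p0‖ + r / 2) := by
          have hq0 : (0:ℝ) ≤ q := Nat.cast_nonneg q
          have hC1pos : 0 ≤ C1 := le_trans (norm_nonneg _) (hC1' k)
          exact mul_le_mul (mul_le_mul_of_nonneg_left (hC1' k) hq0) h2 (norm_nonneg _)
            (mul_nonneg hq0 hC1pos)
        linarith
      -- combine
      have hsum : (r / 2) * ∑ i, |g k i| ≤ q * C1 * (‖p0‖ + r / 2) + C2 := by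
        have hexp : ((zn k).1 - g k) ⬝ᵥ (p0 + e) =
            (zn k).1 ⬝ᵥ (p0 + e) - g k ⬝ᵥ p0 - g k ⬝ᵥ e := by
          rw [sub_dotProduct, dotProduct_add, dotProduct_add]; ring
        have hcomm : g k ⬝ᵥ p0 = p0 ⬝ᵥ g k := dotProduct_comm _ _
        have h5 : -C2 ≤ (zn k).2 := by have := hC2' k; cases abs_le.mp this; linarith
        rw [hexp, hcomm, hge] at hkey
        linarith
      rw [pi_norm_le_iff_of_nonneg]
      · intro i
        rw [Real.norm_eq_abs]
        have h6 : |g k i| ≤ ∑ j, |g k j| :=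
          Finset.single_le_sum (f := fun j => |g k j|) (fun j _ => abs_nonneg _)
            (Finset.mem_univ i)
        have h7 : (r/2) * |g k i| ≤ (r/2) * ∑ j, |g k j| := by
          apply mul_le_mul_of_nonneg_left h6; linarith
        calc |g k i| = (2/r) * ((r/2) * |g k i|) := by field_simp
          _ ≤ (2/r) * (q * C1 * (‖p0‖ + r / 2) + C2) := by
              apply mul_le_mul_of_nonneg_left _ (by positivity)
              linarith
      · have h8 : (0:ℝ) ≤ (r / 2) * ∑ i, |g k i| := by
          apply mul_le_mul_of_nonneg_left (Finset.sum_nonneg fun i _ => abs_nonneg _)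
            (by linarith) |>.trans_eq' (by ring_nf)
        calc (0:ℝ) = (2/r) * 0 := by ring
          _ ≤ C := by
              rw [hC]
              apply mul_le_mul_of_nonneg_left _ (by positivity)
              nlinarith [hsum]
    -- Bolzano–Weierstrass
    obtain ⟨glim, _, ψ, hψ, hgψ⟩ :=
      tendsto_subseq_of_bounded (Metric.isBounded_closedBall (x := (0 : Fin q → ℝ)) (r := C))
        (fun k => mem_closedBall_zero_iff.mpr (hgbound k))
    have hψat : Tendsto ψ atTop atTop := hψ.tendsto_atTop
    refine ⟨glim, ?_, ?_, ?_⟩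
    · exact R.closed_of_finiteDimensional.mem_of_tendsto hgψ
        (Eventually.of_forall fun k => hgR (ψ k))
    · have ht : Tendsto (fun k => (zn (ψ k)).1 - g (ψ k)) atTop (nhds (z.1 - glim)) :=
        ((hz1.comp hψat).sub hgψ)
      exact hKstar_closed.mem_of_tendsto ht
        (Eventually.of_forall fun k => hgK (ψ k))
    · refine le_of_tendsto_of_tendsto' (hz2.comp hψat)
        (((cont_dotr p0).tendsto glim).comp hgψ) ?_
      intro k
      exact hgle (ψ k)
  -- Step C : D is convex
  have hDconvex : Convex ℝ D := by
    rintro z hz w hw a bb ha hb hab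
    obtain ⟨gz, hgzR, hgzK, hgzle⟩ := hz
    obtain ⟨gw, hgwR, hgwK, hgwle⟩ := hw
    refine ⟨a • gz + bb • gw, R.add_mem (R.smul_mem a hgzR) (R.smul_mem bb hgwR), ?_, ?_⟩
    · intro p hp
      have h1 := hgzK p hp
      have h2 := hgwK p hp
      have : (a • z + bb • w).1 - (a • gz + bb • gw) =
          a • (z.1 - gz) + bb • (w.1 - gw) := by
        simp [Prod.smul_fst]; module
      rw [this, add_dotProduct, smul_dotProduct, smul_dotProduct,
        smul_eq_mul, smul_eq_mul]
      nlinarith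
    · have : (a • z + bb • w).2 = a * z.2 + bb * w.2 := rfl
      rw [this, dotProduct_add, dotProduct_smul, dotProduct_smul,
        smul_eq_mul, smul_eq_mul]
      nlinarith
  -- Step D : separation and contradiction
  by_contra hnot
  obtain ⟨φ, u, hφD, hφcv⟩ := geometric_hahn_banach_closed_point hDconvex hDclosed hnot
  -- D is a cone
  have hDcone : ∀ t : ℝ, 0 < t → ∀ d ∈ D, t • d ∈ D := by
    rintro t ht d ⟨gd, hgdR, hgdK, hgdle⟩
    refine ⟨t • gd, R.smul_mem t hgdR, ?_, ?_⟩
    · intro p hp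
      have h1 := hgdK p hp
      have : (t • d).1 - t • gd = t • (d.1 - gd) := by
        simp [Prod.smul_fst, smul_sub]
      rw [this, smul_dotProduct, smul_eq_mul]
      nlinarith
    · have : (t • d).2 = t * d.2 := rfl
      rw [this, dotProduct_smul, smul_eq_mul]
      nlinarith
  have hD0 : ((0 : Fin q → ℝ), (0:ℝ)) ∈ D := ⟨0, R.zero_mem, by simpa using hKstar0, by simp⟩
  have hφ0 : ∀ d ∈ D, φ d ≤ 0 := by
    intro d hd
    by_contra hlt
    push_neg at hlt
    obtain ⟨t, ht0, htu⟩ : ∃ t : ℝ, 0 < t ∧ u < t * φ d := by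
      have h1 : (0:ℝ) < u + 1 + |u| := by nlinarith [abs_nonneg u, le_abs_self u, neg_abs_le u]
      refine ⟨(u + 1 + |u|) / φ d, div_pos h1 hlt, ?_⟩
      rw [div_mul_cancel₀ _ (ne_of_gt hlt)]
      nlinarith [abs_nonneg u, le_abs_self u]
    have := hφD _ (hDcone t ht0 d hd)
    rw [_root_.map_smul, smul_eq_mul] at this
    linarith
  have hu : 0 < u := by
    have := hφD _ hD0
    rw [show ((0 : Fin q → ℝ), (0:ℝ)) = (0 : (Fin q → ℝ) × ℝ) from rfl, map_zero] at this
    exact this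
  -- representation of φ
  set τ : ℝ := φ (0, 1) with hτ
  set gs : Fin q → ℝ := fun i => φ (Pi.single i 1, 0) with hgs
  have hrep : ∀ (x : Fin q → ℝ) (t : ℝ), φ (x, t) = gs ⬝ᵥ x + τ * t := by
    intro x t
    have h1 : (x, t) = (x, (0:ℝ)) + t • ((0:Fin q → ℝ), (1:ℝ)) := by
      simp [Prod.ext_iff]
    rw [h1, map_add, _root_.map_smul, smul_eq_mul]
    rw [show t * φ ((0:Fin q → ℝ), (1:ℝ)) = τ * t by rw [hτ]; ring]
    congr 1
    · set ψl : (Fin q → ℝ) →ₗ[ℝ] ℝ := φ.toLinearMap.comp (LinearMap.inl ℝ (Fin q → ℝ) ℝ)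
        with hψl
      have h2 := lin_eq_dot ψl x
      simp only [hψl, LinearMap.comp_apply, LinearMap.inl_apply,
        ContinuousLinearMap.coe_coe] at h2
      exact h2
  -- consequences
  have hτpos : 0 ≤ τ := by
    have hd : ((0 : Fin q → ℝ), (-1:ℝ)) ∈ D := ⟨0, R.zero_mem, by simpa using hKstar0, by simp⟩
    have := hφ0 _ hd
    rw [hrep] at this
    simpa using this
  have hgsK : ∀ w ∈ Kstar, gs ⬝ᵥ w ≤ 0 := by
    intro w hwK
    have hd : (w, (0:ℝ)) ∈ D := ⟨0, R.zero_mem, by simpa using hwK, by simp⟩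
    have := hφ0 _ hd
    rw [hrep] at this
    simpa using this
  have hgsR : ∀ g ∈ R, gs ⬝ᵥ g + τ * (p0 ⬝ᵥ g) = 0 := by
    intro g hgR
    have hd : (g, p0 ⬝ᵥ g) ∈ D := ⟨g, hgR, by simpa using hKstar0, le_refl _⟩
    have hd' : (-g, p0 ⬝ᵥ (-g)) ∈ D := ⟨-g, R.neg_mem hgR, by simpa using hKstar0, le_refl _⟩
    have h1 := hφ0 _ hd
    have h2 := hφ0 _ hd'
    rw [hrep] at h1 h2
    rw [dotProduct_neg, dotProduct_neg] at h2
    linarith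
  have hcv' : 0 < gs ⬝ᵥ c + τ * v := by
    have := hφcv
    rw [hrep] at this
    linarith
  -- the primal direction p := -gs
  set p : Fin q → ℝ := -gs with hp
  have hpK : p ∈ K := by
    refine mem_of_dual_dual hcl hcv hcone ⟨pb, hpbK⟩ ?_
    intro w hwK
    have hle := hgsK w hwK
    have hcw : w ⬝ᵥ gs = gs ⬝ᵥ w := dotProduct_comm _ _
    have h9 : 0 ≤ -(w ⬝ᵥ gs) := by rw [hcw]; linarith
    simpa [hp, dotProduct_neg] using h9
  have hAp : A.mulVec p = τ • b := by
    funext j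
    have h1 := hgsR (A.transpose.mulVec (Pi.single j 1))
      ⟨Pi.single j 1, rfl⟩
    rw [Matrix.dotProduct_mulVec gs, Matrix.vecMul_transpose, hp0b] at h1
    have h2 : b ⬝ᵥ Pi.single j 1 = b j := by simp [dotProduct_single]
    have h3 : (A.mulVec gs) ⬝ᵥ Pi.single j 1 = A.mulVec gs j := by
      simp [dotProduct_single]
    rw [h2] at h1
    have h4 : A.mulVec p j = -(A.mulVec gs j) := by
      simp [hp, Matrix.mulVec_neg]
    rw [h4]
    have h5 : (τ • b) j = τ * b j := rfl
    rw [h5, ← h3]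
    linarith
  have hcp : c ⬝ᵥ p < τ * v := by
    rw [hp, dotProduct_neg]
    have := dotProduct_comm gs c
    linarith [hcv']
  -- case split on τ
  rcases lt_or_eq_of_le hτpos with hτ0 | hτ0
  · -- τ > 0
    have hp' : τ⁻¹ • p ∈ K := hcone _ (inv_pos.mpr hτ0) _ hpK
    have hA' : A.mulVec (τ⁻¹ • p) = b := by
      rw [Matrix.mulVec_smul, hAp, smul_smul, inv_mul_cancel₀ (ne_of_gt hτ0), one_smul]
    have := H _ hp' hA'
    rw [dotProduct_smul, smul_eq_mul] at this
    have hvle : v ≤ τ⁻¹ * (c ⬝ᵥ p) := by rw [hv] at this ⊢; linarith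
    have : τ * v ≤ c ⬝ᵥ p := by
      have := mul_le_mul_of_nonneg_left hvle (le_of_lt hτ0)
      rw [← mul_assoc, mul_inv_cancel₀ (ne_of_gt hτ0), one_mul] at this
      linarith
    linarith
  · -- τ = 0
    rw [← hτ0] at hAp hcp
    rw [zero_mul] at hcp
    rw [zero_smul] at hAp
    have hcp0 : c ⬝ᵥ p < 0 := hcp
    -- pb + t • p is feasible for all t > 0
    have hfeas : ∀ t : ℝ, 0 < t → pb + t • p ∈ K ∧ A.mulVec (pb + t • p) = b := by
      intro t ht
      constructor
      · have h1 : t • p ∈ K := hcone t ht p hpK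
        have h2 := hcv hpbK h1 (by norm_num : (0:ℝ) ≤ (1/2:ℝ)) (by norm_num : (0:ℝ) ≤ (1/2:ℝ))
          (by norm_num)
        have h3 := hcone 2 (by norm_num) _ h2
        have : (2:ℝ) • ((1/2 : ℝ) • pb + (1/2 : ℝ) • (t • p)) = pb + t • p := by
          module
        rwa [this] at h3
      · rw [Matrix.mulVec_add, Matrix.mulVec_smul, hAp, smul_zero, add_zero, hpbA]
    set t : ℝ := (δ + 1) / (-(c ⬝ᵥ p)) with hts
    have ht : 0 < t := by
      apply div_pos (by linarith) (by linarith)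
    obtain ⟨hK', hA'⟩ := hfeas t ht
    have := H _ hK' hA'
    rw [dotProduct_add, dotProduct_smul, smul_eq_mul] at this
    have h9 : c ⬝ᵥ p ≠ 0 := ne_of_lt hcp0
    have htc : t * (c ⬝ᵥ p) = -(δ + 1) := by
      rw [hts, div_neg, neg_mul, div_mul_cancel₀ _ h9]
    rw [htc] at this
    rw [hv] at this
    linarith

end EpsVI

/-- Theorem 1 of the paper: with conic-standard-form strategy sets
`Pᵢ = {p : Aᵢ p = bᵢ, p ∈ Kᵢ}` each satisfying Slater's condition, a point
`p̄ = (pb₁, pb₂) ∈ P₁ × P₂` is an ε-approximate solution of the variational inequality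
`VI(f, P₁ × P₂)` (with stacked map `f = (f₁, f₂)`) if and only if there exist dual
multipliers `y₁, y₂` with `fᵢ(p̄) - Aᵢᵀyᵢ ∈ Kᵢ*` and aggregate duality gap at most `ε`. -/
theorem eps_approx_VI_iff_conic_certificate
    (q m : ℕ) (hq : 1 ≤ q) (hm : 1 ≤ m) (ε : ℝ) (hε : 0 ≤ ε)
    (K₁ K₂ : Set (Fin q → ℝ))
    (hK₁closed : IsClosed K₁) (hK₁convex : Convex ℝ K₁)
    (hK₁cone : ∀ t : ℝ, 0 < t → ∀ x ∈ K₁, t • x ∈ K₁)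
    (hK₁int : (interior K₁).Nonempty)
    (hK₂closed : IsClosed K₂) (hK₂convex : Convex ℝ K₂)
    (hK₂cone : ∀ t : ℝ, 0 < t → ∀ x ∈ K₂, t • x ∈ K₂)
    (hK₂int : (interior K₂).Nonempty)
    (A₁ A₂ : Matrix (Fin m) (Fin q) ℝ) (b₁ b₂ : Fin m → ℝ)
    (p₁0 : Fin q → ℝ) (hSlater₁ : p₁0 ∈ interior K₁ ∧ A₁.mulVec p₁0 = b₁)
    (p₂0 : Fin q → ℝ) (hSlater₂ : p₂0 ∈ interior K₂ ∧ A₂.mulVec p₂0 = b₂)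
    (f₁ f₂ : (Fin q → ℝ) × (Fin q → ℝ) → (Fin q → ℝ))
    (pb₁ pb₂ : Fin q → ℝ)
    (hpb₁ : A₁.mulVec pb₁ = b₁ ∧ pb₁ ∈ K₁)
    (hpb₂ : A₂.mulVec pb₂ = b₂ ∧ pb₂ ∈ K₂) :
    (∀ p₁, A₁.mulVec p₁ = b₁ → p₁ ∈ K₁ → ∀ p₂, A₂.mulVec p₂ = b₂ → p₂ ∈ K₂ →
        f₁ (pb₁, pb₂) ⬝ᵥ (p₁ - pb₁) + f₂ (pb₁, pb₂) ⬝ᵥ (p₂ - pb₂) ≥ -ε) ↔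
    (∃ y₁ y₂ : Fin m → ℝ,
      (∀ p ∈ K₁, 0 ≤ (f₁ (pb₁, pb₂) - A₁.transpose.mulVec y₁) ⬝ᵥ p) ∧
      (∀ p ∈ K₂, 0 ≤ (f₂ (pb₁, pb₂) - A₂.transpose.mulVec y₂) ⬝ᵥ p) ∧
      (f₁ (pb₁, pb₂) ⬝ᵥ pb₁ - b₁ ⬝ᵥ y₁) + (f₂ (pb₁, pb₂) ⬝ᵥ pb₂ - b₂ ⬝ᵥ y₂) ≤ ε) := by
  obtain ⟨hpb₁A, hpb₁K⟩ := hpb₁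
  obtain ⟨hpb₂A, hpb₂K⟩ := hpb₂
  set c₁ : Fin q → ℝ := f₁ (pb₁, pb₂) with hc₁
  set c₂ : Fin q → ℝ := f₂ (pb₁, pb₂) with hc₂
  constructor
  · -- forward direction: apply strong conic duality to each player
    intro hVI
    -- the gap set for player 2
    set S₂ : Set ℝ := (fun p => c₂ ⬝ᵥ pb₂ - c₂ ⬝ᵥ p) '' {p | p ∈ K₂ ∧ A₂.mulVec p = b₂}
      with hS₂
    have hS₂ne : S₂.Nonempty := ⟨c₂ ⬝ᵥ pb₂ - c₂ ⬝ᵥ pb₂, ⟨pb₂, ⟨hpb₂K, hpb₂A⟩, rfl⟩⟩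
    have hS₂bdd : ∀ x ∈ S₂, x ≤ ε := by
      rintro x ⟨p, ⟨hpK, hpA⟩, rfl⟩
      dsimp only
      have := hVI pb₁ hpb₁A hpb₁K p hpA hpK
      simp only [sub_self, dotProduct_zero] at this
      rw [dotProduct_sub] at this
      linarith
    set δ₂ : ℝ := sSup S₂ with hδ₂
    have hbdd : BddAbove S₂ := ⟨ε, fun x hx => hS₂bdd x hx⟩
    have hδ₂0 : 0 ≤ δ₂ := by
      have : c₂ ⬝ᵥ pb₂ - c₂ ⬝ᵥ pb₂ ≤ δ₂ :=
        le_csSup hbdd ⟨pb₂, ⟨hpb₂K, hpb₂A⟩, rfl⟩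
      linarith
    have hδ₂ε : δ₂ ≤ ε := csSup_le hS₂ne hS₂bdd
    have H₂ : ∀ p ∈ K₂, A₂.mulVec p = b₂ → c₂ ⬝ᵥ pb₂ - δ₂ ≤ c₂ ⬝ᵥ p := by
      intro p hpK hpA
      have : c₂ ⬝ᵥ pb₂ - c₂ ⬝ᵥ p ≤ δ₂ := le_csSup hbdd ⟨p, ⟨hpK, hpA⟩, rfl⟩
      linarith
    set δ₁ : ℝ := ε - δ₂ with hδ₁
    have hδ₁0 : 0 ≤ δ₁ := by rw [hδ₁]; linarith
    have H₁ : ∀ p ∈ K₁, A₁.mulVec p = b₁ → c₁ ⬝ᵥ pb₁ - δ₁ ≤ c₁ ⬝ᵥ p := by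
      intro p hpK hpA
      have hs : δ₂ ≤ ε - (c₁ ⬝ᵥ pb₁ - c₁ ⬝ᵥ p) := by
        refine csSup_le hS₂ne ?_
        rintro x ⟨p', ⟨hp'K, hp'A⟩, rfl⟩
        dsimp only
        have := hVI p hpA hpK p' hp'A hp'K
        rw [dotProduct_sub, dotProduct_sub] at this
        linarith
      rw [hδ₁]
      linarith
    obtain ⟨y₁, hy₁K, hy₁gap⟩ := EpsVI.conic_duality hK₁closed hK₁convex hK₁cone
      hSlater₁.1 hSlater₁.2 hδ₁0 hpb₁A hpb₁K H₁
    obtain ⟨y₂, hy₂K, hy₂gap⟩ := EpsVI.conic_duality hK₂closed hK₂convex hK₂cone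
      hSlater₂.1 hSlater₂.2 hδ₂0 hpb₂A hpb₂K H₂
    exact ⟨y₁, y₂, hy₁K, hy₂K, by linarith⟩
  · -- backward direction
    rintro ⟨y₁, y₂, h₁, h₂, hsum⟩ p₁ hp₁A hp₁K p₂ hp₂A hp₂K
    have key : ∀ (A : Matrix (Fin m) (Fin q) ℝ) (y : Fin m → ℝ) (p : Fin q → ℝ)
        (b : Fin m → ℝ), A.mulVec p = b → (A.transpose.mulVec y) ⬝ᵥ p = b ⬝ᵥ y := by
      intro A y p b hA
      rw [Matrix.mulVec_transpose, ← Matrix.dotProduct_mulVec, hA, dotProduct_comm]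
    have k₁ : b₁ ⬝ᵥ y₁ ≤ c₁ ⬝ᵥ p₁ := by
      have := h₁ p₁ hp₁K
      rw [sub_dotProduct, key A₁ y₁ p₁ b₁ hp₁A] at this
      linarith
    have k₂ : b₂ ⬝ᵥ y₂ ≤ c₂ ⬝ᵥ p₂ := by
      have := h₂ p₂ hp₂K
      rw [sub_dotProduct, key A₂ y₂ p₂ b₂ hp₂A] at this
      linarith
    rw [dotProduct_sub, dotProduct_sub]
    linarith
end

section
/- (Perfect equilibrium yields zero residuals with complementary slackness.) Let p̄ > 0 and m₁, m₂ ∈ ℝ, and suppose (p₁, p₂) ∈ [0, p̄] × [0, p̄] is an exact equilibrium point, i.e., (−m₁)(q₁ − p₁) + (−m₂)(q₂ − p₂) ≥ 0 for all (q₁, q₂) ∈ [0, p̄] × [0, p̄]. Then there exist y₁, y₂ ≥ 0 such that: y_i ≥ m_i for i = 1, 2; y_i = 0 whenever p_i < p̄; and the duality gap is exactly zero: p̄(y₁ + y₂) − (p₁ m₁ + p₂ m₂) = 0. Consequently, if the observed prices are exact Nash equilibria, the regulator's inverse variational problem admits a feasible point with all residual estimates equal to zero. -/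
private lemma one_coord (pbar : ℝ) (hpbar : 0 < pbar) (m p : ℝ)
    (hp : p ∈ Set.Icc (0 : ℝ) pbar)
    (h : ∀ q ∈ Set.Icc (0 : ℝ) pbar, (-m) * (q - p) ≥ 0) :
    ∃ y : ℝ, 0 ≤ y ∧ m ≤ y ∧ (p < pbar → y = 0) ∧ pbar * y = p * m := by
  rcases eq_or_lt_of_le hp.2 with hpe | hpl
  · have h0 := h 0 ⟨le_refl 0, hpbar.le⟩
    have hm : 0 ≤ m := by nlinarith
    exact ⟨m, hm, le_refl m, fun hc => absurd hpe (ne_of_lt hc), by rw [hpe]⟩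
  · have h1 := h pbar ⟨hpbar.le, le_refl pbar⟩
    have h0 := h 0 ⟨le_refl 0, hpbar.le⟩
    have hm : m ≤ 0 := by nlinarith
    have hpm : p * m = 0 := by nlinarith [hp.1]
    exact ⟨0, le_refl 0, hm, fun _ => rfl, by rw [hpm, mul_zero]⟩

/-- Perfect equilibrium yields zero residuals with complementary slackness: if
`(p₁, p₂) ∈ [0, pbar]²` is an exact equilibrium point of the box-constrained game with
marginal utilities `m₁, m₂`, then there exist dual variables `y₁, y₂ ≥ 0` with `yᵢ ≥ mᵢ`,
`yᵢ = 0` whenever `pᵢ < pbar`, and duality gap exactly zero — so the regulator's inverse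
variational problem admits a feasible point with all residual estimates equal to zero. -/
theorem perfect_equilibrium_zero_residual
    (pbar : ℝ) (hpbar : 0 < pbar) (m₁ m₂ p₁ p₂ : ℝ)
    (hp₁ : p₁ ∈ Set.Icc (0 : ℝ) pbar) (hp₂ : p₂ ∈ Set.Icc (0 : ℝ) pbar)
    (heq : ∀ q₁ ∈ Set.Icc (0 : ℝ) pbar, ∀ q₂ ∈ Set.Icc (0 : ℝ) pbar,
      (-m₁) * (q₁ - p₁) + (-m₂) * (q₂ - p₂) ≥ 0) :
    ∃ y₁ y₂ : ℝ, 0 ≤ y₁ ∧ 0 ≤ y₂ ∧ m₁ ≤ y₁ ∧ m₂ ≤ y₂ ∧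
      (p₁ < pbar → y₁ = 0) ∧ (p₂ < pbar → y₂ = 0) ∧
      pbar * (y₁ + y₂) - (p₁ * m₁ + p₂ * m₂) = 0 := by
  obtain ⟨y₁, hy₁0, hy₁m, hy₁c, hy₁g⟩ := one_coord pbar hpbar m₁ p₁ hp₁ (fun q hq => by
    have := heq q hq p₂ hp₂; simpa using this)
  obtain ⟨y₂, hy₂0, hy₂m, hy₂c, hy₂g⟩ := one_coord pbar hpbar m₂ p₂ hp₂ (fun q hq => by
    have := heq p₁ hp₁ q hq; simpa using this)
  exact ⟨y₁, y₂, hy₁0, hy₂0, hy₁m, hy₂m, hy₁c, hy₂c, by rw [mul_add, hy₁g, hy₂g]; ring⟩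
end
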